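/- There exist constants c > 0 and c′ > 0 such that for all integers k ≥ 1 and m₁ ≥ 4k, there exists a finite set 𝒰 of real m₁×k matrices with the following properties: (1) every U ∈ 𝒰 satisfies Uᵀ U = I_k; (2) for all distinct U, U′ ∈ 𝒰, ‖U Uᵀ − U′ U′ᵀ‖_F² ≥ c k; and (3) log |𝒰| ≥ c′ k (m₁ − k). -/

import Mathlib

open Matrix Finset

/-- Squared Frobenius norm of a matrix. -/
def frobSq {α β : Type*} [Fintype α] [Fintype β] (A : Matrix α β ℝ) : ℝ :=
  ∑ i, ∑ j, (A i j) ^ 2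

namespace Pajor
open MeasureTheory Metric Real
open scoped ENNReal
set_option linter.unusedSectionVars false
set_option linter.unusedVariables false
set_option linter.deprecated false




lemma sep_card_le {d : ℕ} (hd : 1 ≤ d) (F : Finset (EuclideanSpace ℝ (Fin d)))
    (hF1 : ∀ x ∈ F, ‖x‖ ≤ 1) (hsep : ∀ x ∈ F, ∀ y ∈ F, x ≠ y → 1/4 < dist x y) :
    F.card ≤ 9 ^ d := by
  haveI : Nonempty (Fin d) := ⟨⟨0, hd⟩⟩
  haveI : Nontrivial (EuclideanSpace ℝ (Fin d)) := inferInstance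
  set μ : Measure (EuclideanSpace ℝ (Fin d)) := volume
  have hdisj : Set.PairwiseDisjoint (F : Set (EuclideanSpace ℝ (Fin d)))
      (fun x => ball x (1/8)) := by
    intro x hx y hy hxy
    have h := hsep x (by simpa using hx) y (by simpa using hy) hxy
    exact ball_disjoint_ball (by linarith [h, dist_nonneg (x := x) (y := y)])
  have hsub : ∀ x ∈ F, ball x (1/8) ⊆ ball (0 : EuclideanSpace ℝ (Fin d)) (9/8) := by
    intro x hx z hz
    simp only [mem_ball] at hz ⊢
    have := hF1 x hx
    calc dist z 0 ≤ dist z x + dist x 0 := dist_triangle _ _ _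
      _ < 9/8 := by rw [dist_zero_right] at *; linarith
  have hU : μ (⋃ x ∈ F, ball x (1/8)) = ∑ x ∈ F, μ (ball x (1/8)) :=
    measure_biUnion_finset hdisj (fun x _ => measurableSet_ball)
  have hle : ∑ x ∈ F, μ (ball x (1/8)) ≤ μ (ball (0 : EuclideanSpace ℝ (Fin d)) (9/8)) := by
    rw [← hU]; exact measure_mono (Set.iUnion₂_subset hsub)
  have hballx : ∀ x : EuclideanSpace ℝ (Fin d),
      μ (ball x (1/8)) = ENNReal.ofReal ((1/8 : ℝ) ^ d) * μ (ball 0 1) := by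
    intro x
    rw [Measure.addHaar_ball μ x (by norm_num : (0:ℝ) ≤ 1/8)]
    congr 2
    simp [finrank_euclideanSpace_fin]
  have hball9 : μ (ball (0 : EuclideanSpace ℝ (Fin d)) (9/8))
      = ENNReal.ofReal ((9/8 : ℝ) ^ d) * μ (ball 0 1) := by
    rw [Measure.addHaar_ball μ _ (by norm_num : (0:ℝ) ≤ 9/8)]
    congr 2
    simp [finrank_euclideanSpace_fin]
  rw [hball9] at hle
  simp only [hballx, Finset.sum_const, nsmul_eq_mul] at hle
  have hBpos : 0 < μ (ball (0 : EuclideanSpace ℝ (Fin d)) 1) := measure_ball_pos μ _ one_pos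
  have hBfin : μ (ball (0 : EuclideanSpace ℝ (Fin d)) 1) ≠ ⊤ := measure_ball_lt_top.ne
  have h2 : (F.card : ℝ≥0∞) * ENNReal.ofReal ((1/8 : ℝ) ^ d) ≤ ENNReal.ofReal ((9/8 : ℝ) ^ d) := by
    rw [← mul_assoc] at hle
    exact (ENNReal.mul_le_mul_iff_left hBpos.ne' hBfin).mp hle
  have h3 : (F.card : ℝ≥0∞) ≤ ENNReal.ofReal ((9:ℝ) ^ d) := by
    have h8 : ENNReal.ofReal ((1/8 : ℝ) ^ d) * ENNReal.ofReal ((8:ℝ) ^ d) = 1 := by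
      rw [← ENNReal.ofReal_mul (by positivity)]
      norm_num [← mul_pow]
    calc (F.card : ℝ≥0∞)
        = (F.card : ℝ≥0∞) * (ENNReal.ofReal ((1/8 : ℝ) ^ d) * ENNReal.ofReal ((8:ℝ) ^ d)) := by
          rw [h8, mul_one]
      _ = ((F.card : ℝ≥0∞) * ENNReal.ofReal ((1/8 : ℝ) ^ d)) * ENNReal.ofReal ((8:ℝ) ^ d) := by
          ring
      _ ≤ ENNReal.ofReal ((9/8 : ℝ) ^ d) * ENNReal.ofReal ((8:ℝ) ^ d) := mul_le_mul_left h2 _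
      _ = ENNReal.ofReal ((9:ℝ) ^ d) := by
          rw [← ENNReal.ofReal_mul (by positivity)]
          norm_num [← mul_pow]
  have h4 : ((F.card : ℕ) : ℝ≥0∞) ≤ ((9 ^ d : ℕ) : ℝ≥0∞) := by
    convert h3 using 1
    rw [← ENNReal.ofReal_natCast]
    push_cast
    ring_nf
  exact_mod_cast h4

lemma exists_net (d : ℕ) (hd : 1 ≤ d) :
    ∃ N : Finset (EuclideanSpace ℝ (Fin d)), N.card ≤ 9 ^ d ∧
      (∀ u ∈ N, ‖u‖ ≤ 1) ∧
      ∀ w : EuclideanSpace ℝ (Fin d), ‖w‖ ≤ 1 → ∃ u ∈ N, ‖w - u‖ ≤ 1/4 := by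
  classical
  by_contra hcon
  push_neg at hcon
  have key : ∀ j : ℕ, ∃ F : Finset (EuclideanSpace ℝ (Fin d)),
      (∀ x ∈ F, ‖x‖ ≤ 1) ∧ (∀ x ∈ F, ∀ y ∈ F, x ≠ y → 1/4 < dist x y) ∧ j ≤ F.card := by
    intro j
    induction j with
    | zero => exact ⟨∅, by simp, by simp, by simp⟩
    | succ j ih =>
      obtain ⟨F, h1, h2, h3⟩ := ih
      obtain ⟨w, hw, hwfar⟩ := hcon F (sep_card_le hd F h1 h2) h1
      have hwF : w ∉ F := by
        intro hmem
        have := hwfar w hmem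
        rw [sub_self] at this
        simp at this
        linarith
      refine ⟨insert w F, ?_, ?_, ?_⟩
      · intro x hx
        rcases Finset.mem_insert.mp hx with rfl | hx
        · exact hw
        · exact h1 x hx
      · intro x hx y hy hxy
        rcases Finset.mem_insert.mp hx with rfl | hx' <;>
          rcases Finset.mem_insert.mp hy with rfl | hy'
        · exact absurd rfl hxy
        · rw [dist_eq_norm]; exact hwfar y hy'
        · rw [dist_comm, dist_eq_norm]; exact hwfar x hx'
        · exact h2 x hx' y hy' hxy
      · rw [Finset.card_insert_of_notMem hwF]; omega
  obtain ⟨F, h1, h2, h3⟩ := key (9 ^ d + 1)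
  have := sep_card_le hd F h1 h2
  omega




lemma sum_exp_prod {P : Type*} [Fintype P] [DecidableEq P] (g : P → Bool → ℝ) :
    ∑ σ : P → Bool, ∏ p, g p (σ p) = ∏ p, (g p true + g p false) := by
  have : ∀ p : P, g p true + g p false = ∑ b ∈ (Finset.univ : Finset Bool), g p b := by
    intro p; simp
  simp_rw [this]
  rw [Finset.prod_univ_sum (fun _ => (Finset.univ : Finset Bool)) g]
  rw [Fintype.piFinset_univ]

lemma chernoff_count {P : Type*} [Fintype P] [DecidableEq P] (a : P → ℝ)
    (ha : ∑ p, a p ^ 2 ≤ 1) (t : ℝ) (ht : 0 ≤ t) :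
    ((Finset.univ.filter
        (fun σ : P → Bool => t ≤ ∑ p, a p * (if σ p then (1:ℝ) else -1))).card : ℝ)
      ≤ 2 ^ (Fintype.card P) * Real.exp (-(t^2)/2) := by
  set f : (P → Bool) → ℝ := fun σ => ∑ p, a p * (if σ p then (1:ℝ) else -1) with hf
  have hS : ∑ σ : P → Bool, Real.exp (t * f σ) ≤ 2 ^ (Fintype.card P) * Real.exp (t^2/2) := by
    have hfactor : ∀ σ : P → Bool,
        Real.exp (t * f σ) = ∏ p, Real.exp (t * (a p * (if σ p then (1:ℝ) else -1))) := by
      intro σ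
      rw [hf, Finset.mul_sum, Real.exp_sum]
    calc ∑ σ : P → Bool, Real.exp (t * f σ)
        = ∑ σ : P → Bool, ∏ p, Real.exp (t * (a p * (if σ p then (1:ℝ) else -1))) := by
          simp_rw [hfactor]
      _ = ∏ p, (Real.exp (t * (a p * 1)) + Real.exp (t * (a p * (-1)))) := by
          rw [sum_exp_prod (fun p b => Real.exp (t * (a p * (if b then (1:ℝ) else -1))))]
          simp
      _ = ∏ p, 2 * Real.cosh (t * a p) := by
          apply Finset.prod_congr rfl
          intro p _
          rw [Real.cosh_eq]
          ring_nf
      _ ≤ ∏ p, 2 * Real.exp ((t * a p) ^ 2 / 2) := by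
          apply Finset.prod_le_prod
          · intro p _; positivity
          · intro p _
            have := Real.cosh_le_exp_half_sq (t * a p)
            linarith
      _ = 2 ^ (Fintype.card P) * Real.exp (∑ p, (t * a p)^2 / 2) := by
          rw [Finset.prod_mul_distrib, Finset.prod_const, Real.exp_sum, Finset.card_univ]
      _ ≤ 2 ^ (Fintype.card P) * Real.exp (t^2/2) := by
          apply mul_le_mul_of_nonneg_left _ (by positivity)
          apply Real.exp_le_exp.mpr
          have : ∑ p, (t * a p) ^ 2 / 2 = t^2/2 * ∑ p, a p ^2 := by
            rw [Finset.mul_sum]; congr 1; ext p; ring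
          rw [this]
          nlinarith [sq_nonneg t]
  have hlb : ((Finset.univ.filter (fun σ => t ≤ f σ)).card : ℝ) * Real.exp (t^2)
      ≤ ∑ σ : P → Bool, Real.exp (t * f σ) := by
    have : ∀ σ ∈ Finset.univ.filter (fun σ => t ≤ f σ), Real.exp (t^2) ≤ Real.exp (t * f σ) := by
      intro σ hσ
      have := (Finset.mem_filter.mp hσ).2
      apply Real.exp_le_exp.mpr
      nlinarith
    calc ((Finset.univ.filter (fun σ => t ≤ f σ)).card : ℝ) * Real.exp (t^2)
        = ∑ _σ ∈ Finset.univ.filter (fun σ => t ≤ f σ), Real.exp (t^2) := by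
          rw [Finset.sum_const, nsmul_eq_mul]
      _ ≤ ∑ σ ∈ Finset.univ.filter (fun σ => t ≤ f σ), Real.exp (t * f σ) :=
          Finset.sum_le_sum this
      _ ≤ ∑ σ : P → Bool, Real.exp (t * f σ) := by
          apply Finset.sum_le_sum_of_subset_of_nonneg (Finset.filter_subset _ _)
          intro i _ _; positivity
  have h := hlb.trans hS
  have hexp : (0:ℝ) < Real.exp (t^2) := Real.exp_pos _
  have h2 : ((Finset.univ.filter (fun σ => t ≤ f σ)).card : ℝ)
      ≤ (2 ^ (Fintype.card P) * Real.exp (t^2/2)) / Real.exp (t^2) := by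
    rwa [le_div_iff₀ hexp]
  calc ((Finset.univ.filter (fun σ : P → Bool =>
          t ≤ ∑ p, a p * (if σ p then (1:ℝ) else -1))).card : ℝ)
      ≤ (2 ^ (Fintype.card P) * Real.exp (t^2/2)) / Real.exp (t^2) := h2
    _ = 2 ^ (Fintype.card P) * Real.exp (-(t^2)/2) := by
        rw [mul_div_assoc, ← Real.exp_sub]
        ring_nf




variable {P : Type*} [Fintype P] [DecidableEq P]

def dH (σ σ' : P → Bool) : ℕ := (univ.filter fun p => σ p ≠ σ' p).card

lemma dH_self (σ : P → Bool) : dH σ σ = 0 := by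
  unfold dH
  simp

-- ball cardinality bound
lemma ball_card_le (σ : P → Bool) (s : ℕ) :
    ((univ : Finset (P → Bool)).filter (fun σ' => dH σ σ' ≤ s)).card
      ≤ ∑ i ∈ range (s+1), (Fintype.card P).choose i := by
  classical
  set T : Finset (Finset P) := (range (s+1)).biUnion (fun i => Finset.powersetCard i univ) with hT
  have hinj : ∀ σ' ∈ (univ : Finset (P → Bool)).filter (fun σ' => dH σ σ' ≤ s),
      (univ.filter fun p => σ p ≠ σ' p) ∈ T := by
    intro σ' hσ'
    rw [hT, Finset.mem_biUnion]
    refine ⟨dH σ σ', ?_, ?_⟩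
    · rw [Finset.mem_range]
      have := (Finset.mem_filter.mp hσ').2
      omega
    · rw [Finset.mem_powersetCard]
      exact ⟨Finset.subset_univ _, rfl⟩
  have hcard : ((univ : Finset (P → Bool)).filter (fun σ' => dH σ σ' ≤ s)).card ≤ T.card := by
    apply Finset.card_le_card_of_injOn (fun σ' => univ.filter fun p => σ p ≠ σ' p) (fun σ' hσ' => hinj σ' hσ')
    intro x hx y hy hxy
    have hxy' : (univ.filter fun p => σ p ≠ x p) = (univ.filter fun p => σ p ≠ y p) := hxy
    funext p
    by_cases hp : σ p = x p <;> by_cases hq : σ p = y p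
    · rw [← hp, ← hq]
    · exfalso
      have hmem : p ∈ univ.filter fun q => σ q ≠ y q := by simp [hq]
      rw [← hxy'] at hmem
      simp [hp] at hmem
    · exfalso
      have hmem : p ∈ univ.filter fun q => σ q ≠ x q := by simp [hp]
      rw [hxy'] at hmem
      simp [hq] at hmem
    · cases hb : x p <;> cases hc : y p <;> cases hd : σ p <;>
        simp_all
  refine hcard.trans ?_
  rw [hT]
  refine (Finset.card_biUnion_le).trans ?_
  apply Finset.sum_le_sum
  intro i _
  rw [Finset.card_powersetCard, Finset.card_univ]

-- binomial tail bound
lemma binom_tail_le (N s : ℕ) (hs : s ≤ N) :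
    ((∑ i ∈ range (s+1), N.choose i : ℕ) : ℝ) ≤ 2^s * (3/2)^N := by
  have h1 : ((∑ i ∈ range (s+1), N.choose i : ℕ) : ℝ)
      = ∑ i ∈ range (s+1), (N.choose i : ℝ) := by push_cast; ring
  rw [h1]
  have h2 : ∀ i ∈ range (s+1), (N.choose i : ℝ) ≤ 2^s * ((N.choose i : ℝ) * (1/2)^i) := by
    intro i hi
    rw [Finset.mem_range] at hi
    have hile : i ≤ s := by omega
    have : (1:ℝ) ≤ 2^s * (1/2)^i := by
      rw [show ((1:ℝ)/2)^i = (2^i)⁻¹ by rw [one_div, inv_pow]]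
      rw [← div_eq_mul_inv, le_div_iff₀ (by positivity)]
      calc (1:ℝ) * 2^i = 2^i := by ring
        _ ≤ 2^s := by
          apply pow_le_pow_right₀ (by norm_num) hile
    nlinarith [Nat.cast_nonneg (α := ℝ) (N.choose i)]
  calc ∑ i ∈ range (s+1), (N.choose i : ℝ)
      ≤ ∑ i ∈ range (s+1), 2^s * ((N.choose i : ℝ) * (1/2)^i) := Finset.sum_le_sum h2
    _ = 2^s * ∑ i ∈ range (s+1), (N.choose i : ℝ) * (1/2)^i := by rw [Finset.mul_sum]
    _ ≤ 2^s * ∑ i ∈ range (N+1), (N.choose i : ℝ) * (1/2)^i := by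
        apply mul_le_mul_of_nonneg_left _ (by positivity)
        apply Finset.sum_le_sum_of_subset_of_nonneg
        · exact Finset.range_subset_range.mpr (by omega)
        · intro i _ _; positivity
    _ = 2^s * (3/2)^N := by
        congr 1
        rw [show ((3:ℝ)/2) = 1/2 + 1 by norm_num, add_pow]
        apply Finset.sum_congr rfl
        intro i hi
        rw [one_pow]
        ring

-- greedy maximal packing
lemma exists_code (V : Finset (P → Bool)) (s : ℕ) (b : ℕ)
    (hball : ∀ σ : P → Bool, ((univ : Finset (P → Bool)).filter (fun σ' => dH σ σ' ≤ s)).card ≤ b) :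
    ∃ C : Finset (P → Bool), C ⊆ V ∧
      (∀ x ∈ C, ∀ y ∈ C, x ≠ y → s < dH x y) ∧ V.card ≤ C.card * b := by
  classical
  set Pset : Finset (Finset (P → Bool)) :=
    V.powerset.filter (fun C => ∀ x ∈ C, ∀ y ∈ C, x ≠ y → s < dH x y) with hPset
  have hne : Pset.Nonempty := ⟨∅, by simp [hPset]⟩
  obtain ⟨C, hC, hmax⟩ : ∃ C ∈ Pset, ∀ x ∈ Pset, ¬ C < x := by
    obtain ⟨C, hC⟩ := Finset.exists_maximal hne
    exact ⟨C, hC.prop, fun x hx hlt => hlt.not_ge (hC.2 hx hlt.le)⟩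
  rw [hPset, Finset.mem_filter, Finset.mem_powerset] at hC
  refine ⟨C, hC.1, hC.2, ?_⟩
  have hcover : ∀ v ∈ V, ∃ c ∈ C, dH c v ≤ s := by
    intro v hv
    by_contra hfar
    push_neg at hfar
    have hvC : v ∉ C := by
      intro hmem
      have := hfar v hmem
      rw [dH_self] at this
      omega
    have hins : insert v C ∈ Pset := by
      rw [hPset, Finset.mem_filter, Finset.mem_powerset]
      constructor
      · exact Finset.insert_subset hv hC.1
      · intro x hx y hy hxy
        rcases Finset.mem_insert.mp hx with rfl | hx' <;>
          rcases Finset.mem_insert.mp hy with rfl | hy'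
        · exact absurd rfl hxy
        · have h := hfar y hy'
          have : dH x y = dH y x := by
            unfold dH
            congr 1
            apply Finset.filter_congr
            intro p _
            simp only [ne_eq, eq_iff_iff]
            tauto
          omega
        · have h := hfar x hx'
          omega
        · exact hC.2 x hx' y hy' hxy
    exact hmax _ hins (Finset.ssubset_insert hvC)
  have hsub : V ⊆ C.biUnion (fun c => (univ : Finset (P → Bool)).filter (fun σ' => dH c σ' ≤ s)) := by
    intro v hv
    rw [Finset.mem_biUnion]
    obtain ⟨c, hc, hcv⟩ := hcover v hv
    exact ⟨c, hc, by simp [hcv]⟩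
  calc V.card ≤ (C.biUnion (fun c => (univ : Finset (P → Bool)).filter (fun σ' => dH c σ' ≤ s))).card :=
        Finset.card_le_card hsub
    _ ≤ ∑ c ∈ C, ((univ : Finset (P → Bool)).filter (fun σ' => dH c σ' ≤ s)).card :=
        Finset.card_biUnion_le
    _ ≤ ∑ c ∈ C, b := Finset.sum_le_sum (fun c _ => hball c)
    _ = C.card * b := by rw [Finset.sum_const, smul_eq_mul]




lemma norm_ev_sq {d : ℕ} (x : Fin d → ℝ) :
    ‖(WithLp.equiv 2 (Fin d → ℝ)).symm x‖ ^ 2 = x ⬝ᵥ x := by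
  rw [EuclideanSpace.norm_eq]
  rw [Real.sq_sqrt (by positivity)]
  unfold dotProduct
  apply Finset.sum_congr rfl
  intro i _
  simp [Real.norm_eq_abs, sq_abs]
  ring

lemma inner_ev {d : ℕ} (v w : EuclideanSpace ℝ (Fin d)) :
    (inner ℝ v w : ℝ) = ∑ i, v i * w i := by
  rw [PiLp.inner_apply]
  apply Finset.sum_congr rfl
  intro i _
  simp [RCLike.inner_apply, conj_trivial]
  ring

lemma opnorm_from_net {n k : ℕ} (B : Matrix (Fin n) (Fin k) ℝ)
    (Nk : Finset (EuclideanSpace ℝ (Fin k))) (Nn : Finset (EuclideanSpace ℝ (Fin n)))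
    (hNn1 : ∀ v ∈ Nn, ‖v‖ ≤ 1)
    (covk : ∀ w : EuclideanSpace ℝ (Fin k), ‖w‖ ≤ 1 → ∃ u ∈ Nk, ‖w - u‖ ≤ 1/4)
    (covn : ∀ w : EuclideanSpace ℝ (Fin n), ‖w‖ ≤ 1 → ∃ v ∈ Nn, ‖w - v‖ ≤ 1/4)
    (t : ℝ) (ht : 0 ≤ t)
    (hnet : ∀ u ∈ Nk, ∀ v ∈ Nn, (inner ℝ v (Matrix.toEuclideanLin B u) : ℝ) ≤ t) :
    ∀ x : Fin k → ℝ, (B *ᵥ x) ⬝ᵥ (B *ᵥ x) ≤ (2*t)^2 * (x ⬝ᵥ x) := by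
  set T : EuclideanSpace ℝ (Fin k) →L[ℝ] EuclideanSpace ℝ (Fin n) :=
    LinearMap.toContinuousLinearMap (Matrix.toEuclideanLin B) with hT
  have hTapp : ∀ w : EuclideanSpace ℝ (Fin k), T w = Matrix.toEuclideanLin B w := fun w => rfl
  set L := ‖T‖ with hL
  have hL0 : 0 ≤ L := norm_nonneg _
  have claim1 : ∀ w : EuclideanSpace ℝ (Fin k), ‖w‖ ≤ 1 → ‖T w‖ ≤ t + L/2 := by
    intro w hw
    obtain ⟨u, hu, huw⟩ := covk w hw
    rcases eq_or_ne (T w) 0 with h0 | h0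
    · rw [h0, norm_zero]; positivity
    · set v : EuclideanSpace ℝ (Fin n) := ‖T w‖⁻¹ • T w with hv
      have hvnorm : ‖v‖ = 1 := norm_smul_inv_norm h0
      obtain ⟨v₀, hv₀, hvv₀⟩ := covn v (le_of_eq hvnorm)
      have hinner : (inner ℝ v (T w) : ℝ) = ‖T w‖ := by
        rw [hv, real_inner_smul_left, real_inner_self_eq_norm_sq]
        have : ‖T w‖ ≠ 0 := norm_ne_zero_iff.mpr h0
        field_simp
      have hdecomp : (inner ℝ v (T w) : ℝ)
          = inner ℝ v₀ (T u) + inner ℝ (v - v₀) (T w) + (inner ℝ v₀ (T w - T u) : ℝ) := by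
        rw [inner_sub_left, inner_sub_right]
        ring
      have hb1 : (inner ℝ v₀ (T u) : ℝ) ≤ t := by
        rw [hTapp]
        exact hnet u hu v₀ hv₀
      have hTwL : ‖T w‖ ≤ L := by
        calc ‖T w‖ ≤ L * ‖w‖ := T.le_opNorm w
          _ ≤ L * 1 := mul_le_mul_of_nonneg_left hw hL0
          _ = L := mul_one L
      have hb2 : (inner ℝ (v - v₀) (T w) : ℝ) ≤ (1/4) * L := by
        calc (inner ℝ (v - v₀) (T w) : ℝ) ≤ ‖v - v₀‖ * ‖T w‖ := real_inner_le_norm _ _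
          _ ≤ (1/4) * L :=
            mul_le_mul hvv₀ hTwL (norm_nonneg _) (by norm_num)
      have hb3 : (inner ℝ v₀ (T w - T u) : ℝ) ≤ L * (1/4) := by
        have h1 : T w - T u = T (w - u) := (map_sub T w u).symm
        have h3 : ‖T w - T u‖ ≤ L * (1/4) := by
          rw [h1]
          calc ‖T (w - u)‖ ≤ L * ‖w - u‖ := T.le_opNorm _
            _ ≤ L * (1/4) := mul_le_mul_of_nonneg_left huw hL0
        calc (inner ℝ v₀ (T w - T u) : ℝ) ≤ ‖v₀‖ * ‖T w - T u‖ := real_inner_le_norm _ _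
          _ ≤ 1 * (L * (1/4)) :=
            mul_le_mul (hNn1 v₀ hv₀) h3 (norm_nonneg _) zero_le_one
          _ = L * (1/4) := one_mul _
      rw [← hinner]
      rw [hdecomp]
      linarith
  have claim2 : L ≤ t + L/2 := by
    rw [hL]
    apply ContinuousLinearMap.opNorm_le_bound T (by positivity)
    intro x
    rcases eq_or_ne x 0 with rfl | hx0
    · simp
    · have hxn : ‖x‖ ≠ 0 := norm_ne_zero_iff.mpr hx0
      set w : EuclideanSpace ℝ (Fin k) := ‖x‖⁻¹ • x with hw
      have hwnorm : ‖w‖ = 1 := norm_smul_inv_norm hx0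
      have h1 := claim1 w (le_of_eq hwnorm)
      have h2 : T w = ‖x‖⁻¹ • T x := by rw [hw, _root_.map_smul]
      rw [h2, norm_smul, norm_inv, norm_norm] at h1
      have hxpos : 0 < ‖x‖ := lt_of_le_of_ne (norm_nonneg _) (Ne.symm hxn)
      calc ‖T x‖ = ‖x‖ * (‖x‖⁻¹ * ‖T x‖) := by field_simp
        _ ≤ ‖x‖ * (t + L/2) := mul_le_mul_of_nonneg_left h1 (norm_nonneg x)
        _ = (t + L/2) * ‖x‖ := by ring
  have hL2t : L ≤ 2 * t := by linarith
  intro x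
  set x' : EuclideanSpace ℝ (Fin k) := (WithLp.equiv 2 (Fin k → ℝ)).symm x with hx'
  have hTx : T x' = (WithLp.equiv 2 (Fin n → ℝ)).symm (B *ᵥ x) := by
    rw [hTapp, Matrix.toEuclideanLin_apply]
    congr 1
  have h1 : (B *ᵥ x) ⬝ᵥ (B *ᵥ x) = ‖T x'‖ ^ 2 := by rw [hTx, norm_ev_sq]
  have h2 : ‖T x'‖ ≤ L * ‖x'‖ := T.le_opNorm _
  have h3 : ‖x'‖ ^ 2 = x ⬝ᵥ x := norm_ev_sq x
  have h4 : ‖T x'‖ ^ 2 ≤ (L * ‖x'‖)^2 :=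
    pow_le_pow_left₀ (norm_nonneg _) h2 2
  have h5 : L^2 ≤ (2*t)^2 := pow_le_pow_left₀ hL0 hL2t 2
  rw [h1]
  calc ‖T x'‖ ^ 2 ≤ (L * ‖x'‖)^2 := h4
    _ = L^2 * ‖x'‖^2 := by ring
    _ ≤ (2*t)^2 * ‖x'‖^2 := mul_le_mul_of_nonneg_right h5 (sq_nonneg _)
    _ = (2*t)^2 * (x ⬝ᵥ x) := by rw [h3]







variable {k n : ℕ}

def Mk (X : Matrix (Fin n) (Fin k) ℝ) : Matrix (Fin k ⊕ Fin n) (Fin k) ℝ :=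
  Matrix.fromRows 1 X

def Gm (X : Matrix (Fin n) (Fin k) ℝ) : Matrix (Fin k) (Fin k) ℝ := 1 + Xᵀ * X

lemma MtM (X : Matrix (Fin n) (Fin k) ℝ) : (Mk X)ᵀ * Mk X = Gm X := by
  rw [Mk, Matrix.transpose_fromRows, Matrix.fromCols_mul_fromRows, Gm, Matrix.transpose_one,
    Matrix.one_mul]

lemma Gm_quadform (X : Matrix (Fin n) (Fin k) ℝ) (v : Fin k → ℝ) :
    v ⬝ᵥ (Gm X) *ᵥ v = v ⬝ᵥ v + (X *ᵥ v) ⬝ᵥ (X *ᵥ v) := by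
  rw [Gm, Matrix.add_mulVec, dotProduct_add, Matrix.one_mulVec]
  congr 1
  rw [← Matrix.mulVec_mulVec, Matrix.dotProduct_mulVec, Matrix.vecMul_transpose]

lemma dotProduct_self_nonneg' {ι : Type*} [Fintype ι] (v : ι → ℝ) : 0 ≤ v ⬝ᵥ v :=
  Finset.sum_nonneg fun i _ => mul_self_nonneg _

lemma Gm_posdef (X : Matrix (Fin n) (Fin k) ℝ) : (Gm X).PosDef := by
  rw [Matrix.posDef_iff_dotProduct_mulVec]
  constructor
  · unfold Gm
    unfold Matrix.IsHermitian
    rw [conjTranspose_eq_transpose_of_trivial, Matrix.transpose_add, Matrix.transpose_one,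
      Matrix.transpose_mul, Matrix.transpose_transpose]
  · intro x hx
    have h := Gm_quadform X x
    have h1 : 0 < x ⬝ᵥ x := by
      rcases Function.ne_iff.mp hx with ⟨i, hi⟩
      have hii : 0 < x i * x i := mul_self_pos.mpr hi
      have hsum : x i * x i ≤ ∑ j, x j * x j :=
        Finset.single_le_sum (f := fun j => x j * x j)
          (fun j _ => mul_self_nonneg _) (Finset.mem_univ i)
      unfold dotProduct
      linarith
    have h2 := dotProduct_self_nonneg' (X *ᵥ x)
    have hstar : star x = x := by simp
    rw [hstar, h]
    linarith

open scoped MatrixOrder in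
noncomputable def Hm (X : Matrix (Fin n) (Fin k) ℝ) : Matrix (Fin k) (Fin k) ℝ :=
  CFC.sqrt (Gm X)

open scoped MatrixOrder in
lemma Hm_mul_self (X : Matrix (Fin n) (Fin k) ℝ) : Hm X * Hm X = Gm X :=
  CFC.sqrt_mul_sqrt_self _ (Gm_posdef X).posSemidef.nonneg

open scoped MatrixOrder in
lemma Hm_symm (X : Matrix (Fin n) (Fin k) ℝ) : (Hm X)ᵀ = Hm X := by
  have h := (CFC.sqrt_nonneg (Gm X)).posSemidef.1
  unfold Matrix.IsHermitian at h
  rw [conjTranspose_eq_transpose_of_trivial] at h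
  exact h

lemma Hm_det_isUnit (X : Matrix (Fin n) (Fin k) ℝ) : IsUnit (Hm X).det := by
  have h : (Hm X).det * (Hm X).det = (Gm X).det := by
    rw [← Matrix.det_mul, Hm_mul_self]
  have hG : 0 < (Gm X).det := by
    have := (Gm_posdef X).det_pos
    simpa using this
  rw [isUnit_iff_ne_zero]
  intro h0
  rw [h0, mul_zero] at h
  linarith

lemma Gm_det_isUnit (X : Matrix (Fin n) (Fin k) ℝ) : IsUnit (Gm X).det := by
  have hG : 0 < (Gm X).det := by have := (Gm_posdef X).det_pos; simpa using this
  exact isUnit_iff_ne_zero.mpr (ne_of_gt hG)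

lemma Hinv_mul (X : Matrix (Fin n) (Fin k) ℝ) : (Hm X)⁻¹ * Hm X = 1 :=
  Matrix.nonsing_inv_mul _ (Hm_det_isUnit X)

lemma mul_Hinv (X : Matrix (Fin n) (Fin k) ℝ) : Hm X * (Hm X)⁻¹ = 1 :=
  Matrix.mul_nonsing_inv _ (Hm_det_isUnit X)

lemma Hinv_symm (X : Matrix (Fin n) (Fin k) ℝ) : ((Hm X)⁻¹)ᵀ = (Hm X)⁻¹ := by
  rw [Matrix.transpose_nonsing_inv, Hm_symm]

lemma Ginv_eq (X : Matrix (Fin n) (Fin k) ℝ) : (Gm X)⁻¹ = (Hm X)⁻¹ * (Hm X)⁻¹ := by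
  rw [← Hm_mul_self, Matrix.mul_inv_rev]

lemma Ginv_symm (X : Matrix (Fin n) (Fin k) ℝ) : ((Gm X)⁻¹)ᵀ = (Gm X)⁻¹ := by
  rw [Matrix.transpose_nonsing_inv]
  congr 1
  rw [Gm, Matrix.transpose_add, Matrix.transpose_one, Matrix.transpose_mul,
    Matrix.transpose_transpose]

noncomputable def Um (X : Matrix (Fin n) (Fin k) ℝ) : Matrix (Fin k ⊕ Fin n) (Fin k) ℝ :=
  Mk X * (Hm X)⁻¹

noncomputable def Pm (X : Matrix (Fin n) (Fin k) ℝ) : Matrix (Fin k ⊕ Fin n) (Fin k ⊕ Fin n) ℝ :=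
  Mk X * (Gm X)⁻¹ * (Mk X)ᵀ

lemma Um_orthonormal (X : Matrix (Fin n) (Fin k) ℝ) : (Um X)ᵀ * Um X = 1 := by
  rw [Um, Matrix.transpose_mul, Hinv_symm]
  calc (Hm X)⁻¹ * (Mk X)ᵀ * (Mk X * (Hm X)⁻¹)
      = (Hm X)⁻¹ * ((Mk X)ᵀ * Mk X) * (Hm X)⁻¹ := by
        simp only [Matrix.mul_assoc]
    _ = (Hm X)⁻¹ * (Hm X * Hm X) * (Hm X)⁻¹ := by rw [MtM, Hm_mul_self]
    _ = ((Hm X)⁻¹ * Hm X) * (Hm X * (Hm X)⁻¹) := by simp only [Matrix.mul_assoc]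
    _ = 1 := by rw [Hinv_mul, mul_Hinv, one_mul]

lemma Um_proj (X : Matrix (Fin n) (Fin k) ℝ) : Um X * (Um X)ᵀ = Pm X := by
  rw [Um, Matrix.transpose_mul, Hinv_symm, Pm, Ginv_eq]
  simp only [Matrix.mul_assoc]

lemma Pm_symm (X : Matrix (Fin n) (Fin k) ℝ) : (Pm X)ᵀ = Pm X := by
  rw [Pm, Matrix.transpose_mul, Matrix.transpose_mul, Ginv_symm, Matrix.transpose_transpose]
  simp only [Matrix.mul_assoc]

lemma Pm_idem (X : Matrix (Fin n) (Fin k) ℝ) : Pm X * Pm X = Pm X := by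
  rw [Pm]
  calc Mk X * (Gm X)⁻¹ * (Mk X)ᵀ * (Mk X * (Gm X)⁻¹ * (Mk X)ᵀ)
      = Mk X * ((Gm X)⁻¹ * (((Mk X)ᵀ * Mk X) * ((Gm X)⁻¹ * (Mk X)ᵀ))) := by
        simp only [Matrix.mul_assoc]
    _ = Mk X * (((Gm X)⁻¹ * Gm X) * ((Gm X)⁻¹ * (Mk X)ᵀ)) := by
        rw [MtM]; simp only [Matrix.mul_assoc]
    _ = Mk X * (Gm X)⁻¹ * (Mk X)ᵀ := by
        rw [Matrix.nonsing_inv_mul _ (Gm_det_isUnit X), Matrix.one_mul, Matrix.mul_assoc]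

lemma trace_Pm (X : Matrix (Fin n) (Fin k) ℝ) : (Pm X).trace = (k : ℝ) := by
  rw [Pm, Matrix.trace_mul_comm (Mk X * (Gm X)⁻¹) ((Mk X)ᵀ), ← Matrix.mul_assoc, MtM,
    Matrix.trace_mul_comm, Matrix.nonsing_inv_mul _ (Gm_det_isUnit X)]
  simp [Matrix.trace_one]



-- norm helpers
noncomputable def nr {ι : Type*} [Fintype ι] (v : ι → ℝ) : ℝ := Real.sqrt (v ⬝ᵥ v)

lemma nr_nonneg {ι : Type*} [Fintype ι] (v : ι → ℝ) : 0 ≤ nr v := Real.sqrt_nonneg _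

lemma nr_sq {ι : Type*} [Fintype ι] (v : ι → ℝ) : nr v ^ 2 = v ⬝ᵥ v :=
  Real.sq_sqrt (dotProduct_self_nonneg' v)

lemma dp_sq_eq {ι : Type*} [Fintype ι] (v : ι → ℝ) : v ⬝ᵥ v = ∑ i, v i ^ 2 := by
  unfold dotProduct; apply Finset.sum_congr rfl; intro i _; ring

lemma dp_le_nr {ι : Type*} [Fintype ι] (u v : ι → ℝ) : u ⬝ᵥ v ≤ nr u * nr v := by
  have cs := Finset.sum_mul_sq_le_sq_mul_sq Finset.univ u v
  have h1 : (u ⬝ᵥ v) ^ 2 ≤ (u ⬝ᵥ u) * (v ⬝ᵥ v) := by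
    rw [dp_sq_eq, dp_sq_eq]; exact cs
  calc u ⬝ᵥ v ≤ |u ⬝ᵥ v| := le_abs_self _
    _ = Real.sqrt ((u ⬝ᵥ v) ^ 2) := (Real.sqrt_sq_eq_abs _).symm
    _ ≤ Real.sqrt ((u ⬝ᵥ u) * (v ⬝ᵥ v)) := Real.sqrt_le_sqrt h1
    _ = nr u * nr v := Real.sqrt_mul (dotProduct_self_nonneg' u) _

lemma nr_triangle {ι : Type*} [Fintype ι] (u v : ι → ℝ) : nr (u + v) ≤ nr u + nr v := by
  have h : (u + v) ⬝ᵥ (u + v) = u ⬝ᵥ u + 2 * (u ⬝ᵥ v) + v ⬝ᵥ v := by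
    rw [add_dotProduct, dotProduct_add, dotProduct_add, dotProduct_comm v u]
    ring
  have hd := dp_le_nr u v
  have h2 : (u + v) ⬝ᵥ (u + v) ≤ (nr u + nr v) ^ 2 := by
    rw [h]
    have hu := nr_sq u; have hv := nr_sq v
    nlinarith
  have := Real.sqrt_le_sqrt h2
  rw [Real.sqrt_sq (add_nonneg (nr_nonneg u) (nr_nonneg v))] at this
  exact this

lemma nr_mulVec_le {q r : ℕ} (A : Matrix (Fin q) (Fin r) ℝ)
    (hA : ∀ v : Fin r → ℝ, (A *ᵥ v) ⬝ᵥ (A *ᵥ v) ≤ (1/4) * (v ⬝ᵥ v)) (v : Fin r → ℝ) :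
    nr (A *ᵥ v) ≤ (1/2) * nr v := by
  have h := hA v
  unfold nr
  calc Real.sqrt ((A *ᵥ v) ⬝ᵥ (A *ᵥ v)) ≤ Real.sqrt ((1/4) * (v ⬝ᵥ v)) := Real.sqrt_le_sqrt h
    _ = Real.sqrt (1/4) * Real.sqrt (v ⬝ᵥ v) := Real.sqrt_mul (by norm_num) _
    _ = (1/2) * Real.sqrt (v ⬝ᵥ v) := by
        rw [show (1:ℝ)/4 = (1/2)^2 by norm_num, Real.sqrt_sq (by norm_num : (0:ℝ) ≤ 1/2)]

-- frobSq as trace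
lemma frobSq_eq_trace {α β : Type*} [Fintype α] [Fintype β] (A : Matrix α β ℝ) :
    frobSq A = (Aᵀ * A).trace := by
  unfold frobSq Matrix.trace
  rw [Finset.sum_comm]
  apply Finset.sum_congr rfl
  intro j _
  simp only [Matrix.diag, Matrix.mul_apply, Matrix.transpose_apply]
  apply Finset.sum_congr rfl
  intro i _
  ring

variable {k n : ℕ}

lemma frobSq_sub_projs (X Y : Matrix (Fin n) (Fin k) ℝ) :
    frobSq (Pm X - Pm Y) = 2 * (Pm X * (1 - Pm Y)).trace := by
  rw [frobSq_eq_trace]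
  have ht : (Pm X - Pm Y)ᵀ = Pm X - Pm Y := by
    rw [Matrix.transpose_sub, Pm_symm, Pm_symm]
  rw [ht]
  have hexp : (Pm X - Pm Y) * (Pm X - Pm Y)
      = Pm X * Pm X - Pm X * Pm Y - Pm Y * Pm X + Pm Y * Pm Y := by
    rw [Matrix.sub_mul, Matrix.mul_sub, Matrix.mul_sub]
    abel
  have hexp2 : Pm X * (1 - Pm Y) = Pm X - Pm X * Pm Y := by
    rw [Matrix.mul_sub, Matrix.mul_one]
  rw [hexp, hexp2]
  simp only [Matrix.trace_add, Matrix.trace_sub, Pm_idem, Matrix.trace_mul_comm (Pm Y) (Pm X)]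
  rw [trace_Pm, trace_Pm]
  ring

-- the quadratic form bound for G⁻¹
lemma Ginv_quad (X : Matrix (Fin n) (Fin k) ℝ)
    (hX : ∀ v : Fin k → ℝ, (X *ᵥ v) ⬝ᵥ (X *ᵥ v) ≤ (1/4) * (v ⬝ᵥ v)) (x : Fin k → ℝ) :
    (4/5) * (x ⬝ᵥ x) ≤ x ⬝ᵥ ((Gm X)⁻¹ *ᵥ x) := by
  set z := (Hm X)⁻¹ *ᵥ x with hz
  have ha : x ⬝ᵥ ((Gm X)⁻¹ *ᵥ x) = z ⬝ᵥ z := by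
    rw [Ginv_eq, ← Matrix.mulVec_mulVec, ← hz, Matrix.dotProduct_mulVec]
    congr 1
    rw [← Hinv_symm, Matrix.vecMul_transpose, ← hz]
  have hb : x = Hm X *ᵥ z := by
    rw [hz, Matrix.mulVec_mulVec, mul_Hinv, Matrix.one_mulVec]
  have hc : x ⬝ᵥ x = z ⬝ᵥ z + (X *ᵥ z) ⬝ᵥ (X *ᵥ z) := by
    have hvm : (Hm X *ᵥ z) ᵥ* Hm X = (Gm X) *ᵥ z := by
      rw [← Hm_symm, Matrix.vecMul_transpose, Hm_symm, Matrix.mulVec_mulVec, Hm_mul_self]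
    conv_lhs => rw [hb]
    rw [Matrix.dotProduct_mulVec, hvm, dotProduct_comm, Gm_quadform]
  have hXz := hX z
  rw [ha]
  rw [hc]
  nlinarith [dotProduct_self_nonneg' z, dotProduct_self_nonneg' (X *ᵥ z)]

lemma frobSq_nonneg {α β : Type*} [Fintype α] [Fintype β] (A : Matrix α β ℝ) : 0 ≤ frobSq A := by
  unfold frobSq
  apply Finset.sum_nonneg; intro i _
  apply Finset.sum_nonneg; intro j _
  positivity

lemma R_symm (Y : Matrix (Fin n) (Fin k) ℝ) : (1 - Pm Y)ᵀ = 1 - Pm Y := by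
  rw [Matrix.transpose_sub, Matrix.transpose_one, Pm_symm]

lemma mulVec_apply' {α β : Type*} [Fintype β] (M : Matrix α β ℝ) (v : β → ℝ) (i : α) :
    (M *ᵥ v) i = ∑ j, M i j * v j := rfl

lemma R_idem (Y : Matrix (Fin n) (Fin k) ℝ) : (1 - Pm Y) * (1 - Pm Y) = 1 - Pm Y := by
  simp only [Matrix.sub_mul, Matrix.mul_sub, Matrix.one_mul, Matrix.mul_one, Pm_idem]
  abel

lemma sum_elim_dot {f : Fin k → ℝ} {g : Fin n → ℝ} :
    (Sum.elim f g) ⬝ᵥ (Sum.elim f g) = f ⬝ᵥ f + g ⬝ᵥ g := by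
  unfold dotProduct
  rw [Fintype.sum_sum_type]
  simp

lemma quad_Q_lower (X Y : Matrix (Fin n) (Fin k) ℝ)
    (hY : ∀ v : Fin k → ℝ, (Y *ᵥ v) ⬝ᵥ (Y *ᵥ v) ≤ (1/4) * (v ⬝ᵥ v)) (a : Fin k → ℝ) :
    (4/5) * (((X - Y) *ᵥ a) ⬝ᵥ ((X - Y) *ᵥ a))
      ≤ a ⬝ᵥ (((Mk X)ᵀ * (1 - Pm Y) * Mk X) *ᵥ a) := by
  set R : Matrix (Fin k ⊕ Fin n) (Fin k ⊕ Fin n) ℝ := 1 - Pm Y with hR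
  set w : Fin k ⊕ Fin n → ℝ := Mk X *ᵥ a with hw
  -- step i : quadratic form equals squared norm of R w
  have hQw : ((Mk X)ᵀ * R * Mk X) *ᵥ a = (Mk X)ᵀ *ᵥ (R *ᵥ w) := by
    rw [hw, Matrix.mulVec_mulVec, Matrix.mulVec_mulVec, Matrix.mul_assoc]
  have hRR2 : R = R * R := by rw [hR]; exact (R_idem Y).symm
  have hRsym2 : R = Rᵀ := by rw [hR]; exact (R_symm Y).symm
  have hstep1 : a ⬝ᵥ (((Mk X)ᵀ * R * Mk X) *ᵥ a) = (R *ᵥ w) ⬝ᵥ (R *ᵥ w) := by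
    rw [hQw, Matrix.dotProduct_mulVec, Matrix.vecMul_transpose, ← hw]
    conv_lhs => rw [hRR2, ← Matrix.mulVec_mulVec]
    rw [Matrix.dotProduct_mulVec]
    congr 1
    conv_lhs => rw [hRsym2]
    rw [Matrix.vecMul_transpose]
  -- step ii : R w = w - Mk Y *ᵥ b
  set b : Fin k → ℝ := (Gm Y)⁻¹ *ᵥ ((Mk Y)ᵀ *ᵥ w) with hb
  have hstep2 : R *ᵥ w = w - Mk Y *ᵥ b := by
    rw [hR, Matrix.sub_mulVec, Matrix.one_mulVec]
    congr 1
    rw [hb, hw, Pm]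
    simp only [Matrix.mulVec_mulVec, Matrix.mul_assoc]
  -- step iii : block components
  have hMx : w = Sum.elim a (X *ᵥ a) := by
    rw [hw, Mk, Matrix.fromRows_mulVec, Matrix.one_mulVec]
  have hMy : Mk Y *ᵥ b = Sum.elim b (Y *ᵥ b) := by
    rw [Mk, Matrix.fromRows_mulVec, Matrix.one_mulVec]
  have hdiff : w - Mk Y *ᵥ b = Sum.elim (a - b) (X *ᵥ a - Y *ᵥ b) := by
    rw [hMx, hMy]
    funext i
    cases i <;> simp
  have hsq : (R *ᵥ w) ⬝ᵥ (R *ᵥ w)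
      = (a - b) ⬝ᵥ (a - b) + (X *ᵥ a - Y *ᵥ b) ⬝ᵥ (X *ᵥ a - Y *ᵥ b) := by
    rw [hstep2, hdiff, sum_elim_dot]
  -- step iv : scalar estimate
  set T := nr (a - b) with hT
  set A := nr (X *ᵥ a - Y *ᵥ b) with hA
  set Z := nr ((X - Y) *ᵥ a) with hZ
  have htri : Z ≤ A + (1/2) * T := by
    have hdec : (X - Y) *ᵥ a = (X *ᵥ a - Y *ᵥ b) + Y *ᵥ (b - a) := by
      rw [Matrix.mulVec_sub, Matrix.sub_mulVec]
      abel
    have h1 : nr (Y *ᵥ (b - a)) ≤ (1/2) * nr (b - a) := nr_mulVec_le Y hY _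
    have h2 : nr (b - a) = T := by
      rw [hT]
      unfold nr
      congr 1
      rw [show b - a = -(a-b) by abel]
      rw [neg_dotProduct, dotProduct_neg, neg_neg]
    rw [hZ, hdec]
    calc nr ((X *ᵥ a - Y *ᵥ b) + Y *ᵥ (b - a))
        ≤ nr (X *ᵥ a - Y *ᵥ b) + nr (Y *ᵥ (b - a)) := nr_triangle _ _
      _ ≤ A + (1/2) * T := by rw [← hA]; rw [h2] at h1; linarith
  have hZ2 : Z ^ 2 = ((X - Y) *ᵥ a) ⬝ᵥ ((X - Y) *ᵥ a) := nr_sq _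
  have hA2 : A ^ 2 = (X *ᵥ a - Y *ᵥ b) ⬝ᵥ (X *ᵥ a - Y *ᵥ b) := nr_sq _
  have hT2 : T ^ 2 = (a - b) ⬝ᵥ (a - b) := nr_sq _
  have hZn : 0 ≤ Z := nr_nonneg _
  have hAn : 0 ≤ A := nr_nonneg _
  have hTn : 0 ≤ T := nr_nonneg _
  rw [hstep1, hsq, ← hZ2, ← hA2, ← hT2]
  nlinarith [sq_nonneg (A/2 - T), sq_nonneg (A + T/2)]

lemma Hinv_apply_symm (X : Matrix (Fin n) (Fin k) ℝ) (i j : Fin k) :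
    (Hm X)⁻¹ i j = (Hm X)⁻¹ j i := by
  conv_lhs => rw [← Hinv_symm X]
  rfl

lemma trace_Ginv_Q (X : Matrix (Fin n) (Fin k) ℝ) (Q : Matrix (Fin k) (Fin k) ℝ) :
    ((Gm X)⁻¹ * Q).trace
      = ∑ j, (fun i => (Hm X)⁻¹ i j) ⬝ᵥ (Q *ᵥ (fun i => (Hm X)⁻¹ i j)) := by
  rw [Ginv_eq, Matrix.mul_assoc, Matrix.trace_mul_comm]
  unfold Matrix.trace Matrix.diag
  apply Finset.sum_congr rfl
  intro j _
  simp only [Matrix.mul_apply, dotProduct, mulVec_apply', Finset.sum_mul, Finset.mul_sum]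
  rw [Finset.sum_comm]
  apply Finset.sum_congr rfl
  intro i _
  apply Finset.sum_congr rfl
  intro l _
  rw [Hinv_apply_symm X j i]
  ring

lemma sum_sqn_cols (D : Matrix (Fin n) (Fin k) ℝ) (W : Matrix (Fin k) (Fin k) ℝ) :
    ∑ j, (D *ᵥ (fun i => W i j)) ⬝ᵥ (D *ᵥ (fun i => W i j)) = frobSq (D * W) := by
  unfold frobSq
  rw [Finset.sum_comm]
  apply Finset.sum_congr rfl
  intro j _
  simp only [dotProduct, mulVec_apply', Matrix.mul_apply]
  apply Finset.sum_congr rfl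
  intro i _
  ring

lemma frobSq_DW (X : Matrix (Fin n) (Fin k) ℝ) (D : Matrix (Fin n) (Fin k) ℝ) :
    frobSq (D * (Hm X)⁻¹) = ∑ i, (fun l => D i l) ⬝ᵥ ((Gm X)⁻¹ *ᵥ (fun l => D i l)) := by
  rw [frobSq_eq_trace, Matrix.transpose_mul, Hinv_symm]
  have h1 : (Hm X)⁻¹ * Dᵀ * (D * (Hm X)⁻¹)
      = (Hm X)⁻¹ * (Dᵀ * (D * (Hm X)⁻¹)) := by
    simp only [Matrix.mul_assoc]
  rw [h1, Matrix.trace_mul_comm]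
  have h2 : Dᵀ * (D * (Hm X)⁻¹) * (Hm X)⁻¹ = Dᵀ * (D * (Gm X)⁻¹) := by
    rw [Ginv_eq]
    simp only [Matrix.mul_assoc]
  rw [h2, Matrix.trace_mul_comm]
  unfold Matrix.trace Matrix.diag
  apply Finset.sum_congr rfl
  intro i _
  simp only [Matrix.mul_apply, Matrix.transpose_apply, dotProduct, mulVec_apply',
    Finset.sum_mul, Finset.mul_sum]
  rw [Finset.sum_comm]
  apply Finset.sum_congr rfl
  intro l _
  apply Finset.sum_congr rfl
  intro j _
  ring

lemma frobSq_rows (D : Matrix (Fin n) (Fin k) ℝ) :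
    frobSq D = ∑ i, (fun l => D i l) ⬝ᵥ (fun l => D i l) := by
  unfold frobSq
  apply Finset.sum_congr rfl
  intro i _
  rw [dp_sq_eq]

theorem sep_main (X Y : Matrix (Fin n) (Fin k) ℝ)
    (hX : ∀ v : Fin k → ℝ, (X *ᵥ v) ⬝ᵥ (X *ᵥ v) ≤ (1/4) * (v ⬝ᵥ v))
    (hY : ∀ v : Fin k → ℝ, (Y *ᵥ v) ⬝ᵥ (Y *ᵥ v) ≤ (1/4) * (v ⬝ᵥ v)) :
    frobSq (X - Y) ≤ frobSq (Pm X - Pm Y) := by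
  set Q : Matrix (Fin k) (Fin k) ℝ := (Mk X)ᵀ * (1 - Pm Y) * Mk X with hQdef
  have hPQ : (Pm X * (1 - Pm Y)).trace = ((Gm X)⁻¹ * Q).trace := by
    have h1 : Pm X * (1 - Pm Y) = Mk X * ((Gm X)⁻¹ * ((Mk X)ᵀ * (1 - Pm Y))) := by
      rw [Pm]; simp only [Matrix.mul_assoc]
    rw [h1, Matrix.trace_mul_comm, hQdef]
    simp only [Matrix.mul_assoc]
  set D := X - Y with hD
  have step1 : frobSq (Pm X - Pm Y) = 2 * ((Gm X)⁻¹ * Q).trace := by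
    rw [frobSq_sub_projs, hPQ]
  have step2 : ((Gm X)⁻¹ * Q).trace
      = ∑ j, (fun i => (Hm X)⁻¹ i j) ⬝ᵥ (Q *ᵥ (fun i => (Hm X)⁻¹ i j)) := trace_Ginv_Q X Q
  have step3 : ∑ j, ((4:ℝ)/5) * ((D *ᵥ (fun i => (Hm X)⁻¹ i j)) ⬝ᵥ (D *ᵥ (fun i => (Hm X)⁻¹ i j)))
      ≤ ∑ j, (fun i => (Hm X)⁻¹ i j) ⬝ᵥ (Q *ᵥ (fun i => (Hm X)⁻¹ i j)) := by
    apply Finset.sum_le_sum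
    intro j _
    exact quad_Q_lower X Y hY _
  have step4 : ∑ j, ((4:ℝ)/5) * ((D *ᵥ (fun i => (Hm X)⁻¹ i j)) ⬝ᵥ (D *ᵥ (fun i => (Hm X)⁻¹ i j)))
      = (4/5) * frobSq (D * (Hm X)⁻¹) := by
    rw [← Finset.mul_sum, sum_sqn_cols]
  have step5 : frobSq (D * (Hm X)⁻¹)
      = ∑ i, (fun l => D i l) ⬝ᵥ ((Gm X)⁻¹ *ᵥ (fun l => D i l)) := frobSq_DW X D
  have step6 : (4/5) * frobSq D ≤ ∑ i, (fun l => D i l) ⬝ᵥ ((Gm X)⁻¹ *ᵥ (fun l => D i l)) := by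
    rw [frobSq_rows, Finset.mul_sum]
    apply Finset.sum_le_sum
    intro i _
    exact Ginv_quad X hX _
  have hfnn : 0 ≤ frobSq D := frobSq_nonneg D
  calc frobSq (X - Y) = frobSq D := by rw [hD]
    _ ≤ 2 * ((4/5) * ((4/5) * frobSq D)) := by nlinarith
    _ ≤ 2 * ((4/5) * frobSq (D * (Hm X)⁻¹)) := by
        rw [step5]; nlinarith [step6]
    _ = 2 * (∑ j, ((4:ℝ)/5) * ((D *ᵥ (fun i => (Hm X)⁻¹ i j)) ⬝ᵥ (D *ᵥ (fun i => (Hm X)⁻¹ i j)))) := by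
        rw [step4]
    _ ≤ 2 * (∑ j, (fun i => (Hm X)⁻¹ i j) ⬝ᵥ (Q *ᵥ (fun i => (Hm X)⁻¹ i j))) := by
        nlinarith [step3]
    _ = frobSq (Pm X - Pm Y) := by rw [step1, step2]



def smat {k n : ℕ} (σ : Fin n × Fin k → Bool) : Matrix (Fin n) (Fin k) ℝ :=
  fun i j => if σ (i,j) then 1 else -1

-- Lemma A
lemma exists_good (k n : ℕ) (hk : 1 ≤ k) (hkn : k ≤ n) :
    ∃ Good : Finset (Fin n × Fin k → Bool),
      ((2:ℝ)) ^ (n*k) ≤ 2 * Good.card ∧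
      ∀ σ ∈ Good, ∀ x : Fin k → ℝ,
        ((smat σ) *ᵥ x) ⬝ᵥ ((smat σ) *ᵥ x) ≤ 144 * n * (x ⬝ᵥ x) := by
  classical
  have hn : 1 ≤ n := le_trans hk hkn
  obtain ⟨Nk, hNkcard, hNk1, hNkcov⟩ := exists_net k hk
  obtain ⟨Nn, hNncard, hNn1, hNncov⟩ := exists_net n hn
  set t : ℝ := 6 * Real.sqrt n with ht
  have ht0 : 0 ≤ t := by positivity
  set Good : Finset (Fin n × Fin k → Bool) :=
    univ.filter (fun σ => ∀ u ∈ Nk, ∀ v ∈ Nn,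
      (inner ℝ v (Matrix.toEuclideanLin (smat σ) u) : ℝ) ≤ t) with hGood
  refine ⟨Good, ?_, ?_⟩
  · -- cardinality
    set Bad : Finset (Fin n × Fin k → Bool) :=
      univ.filter (fun σ => ¬ (∀ u ∈ Nk, ∀ v ∈ Nn,
        (inner ℝ v (Matrix.toEuclideanLin (smat σ) u) : ℝ) ≤ t)) with hBad
    have hsplit : Good.card + Bad.card = 2 ^ (n*k) := by
      rw [hGood, hBad, Finset.card_filter_add_card_filter_not]
      rw [Finset.card_univ, Fintype.card_fun]
      simp [Fintype.card_prod]
    have hinner_sum : ∀ (σ : Fin n × Fin k → Bool) (u : EuclideanSpace ℝ (Fin k))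
        (v : EuclideanSpace ℝ (Fin n)),
        (inner ℝ v (Matrix.toEuclideanLin (smat σ) u) : ℝ)
          = ∑ p : Fin n × Fin k, (v p.1 * u p.2) * (if σ p then (1:ℝ) else -1) := by
      intro σ u v
      rw [inner_ev]
      rw [Fintype.sum_prod_type]
      apply Finset.sum_congr rfl
      intro i _
      have hcomp : (Matrix.toEuclideanLin (smat σ) u) i = ∑ j, smat σ i j * u j := rfl
      rw [hcomp, Finset.mul_sum]
      apply Finset.sum_congr rfl
      intro j _
      unfold smat
      ring
    have hBadsub : Bad ⊆ (Nk ×ˢ Nn).biUnion (fun uv =>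
        univ.filter (fun σ : Fin n × Fin k → Bool =>
          t ≤ ∑ p : Fin n × Fin k, (uv.2 p.1 * uv.1 p.2) * (if σ p then (1:ℝ) else -1))) := by
      intro σ hσ
      rw [hBad, Finset.mem_filter] at hσ
      push_neg at hσ
      obtain ⟨u, hu, v, hv, hlt⟩ := hσ.2
      rw [Finset.mem_biUnion]
      refine ⟨(u, v), Finset.mem_product.mpr ⟨hu, hv⟩, ?_⟩
      rw [Finset.mem_filter]
      refine ⟨Finset.mem_univ _, ?_⟩
      rw [← hinner_sum]
      exact le_of_lt hlt
    have hnorm_sq : ∀ (d : ℕ) (w : EuclideanSpace ℝ (Fin d)), ‖w‖ ≤ 1 → ∑ i, w i ^ 2 ≤ 1 := by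
      intro d w hw
      have h1 : ‖w‖ ^ 2 = ∑ i, w i ^ 2 := by
        rw [EuclideanSpace.norm_eq, Real.sq_sqrt (by positivity)]
        apply Finset.sum_congr rfl
        intro i _
        rw [Real.norm_eq_abs, sq_abs]
      nlinarith [norm_nonneg w]
    have hperpair : ∀ uv ∈ Nk ×ˢ Nn,
        ((univ.filter (fun σ : Fin n × Fin k → Bool =>
          t ≤ ∑ p : Fin n × Fin k, (uv.2 p.1 * uv.1 p.2) * (if σ p then (1:ℝ) else -1))).card : ℝ)
        ≤ 2 ^ (n*k) * Real.exp (-(18*n)) := by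
      intro uv huv
      rw [Finset.mem_product] at huv
      have ha : ∑ p : Fin n × Fin k, (uv.2 p.1 * uv.1 p.2) ^ 2 ≤ 1 := by
        have hfact : ∑ p : Fin n × Fin k, (uv.2 p.1 * uv.1 p.2) ^ 2
            = (∑ i, uv.2 i ^ 2) * (∑ j, uv.1 j ^ 2) := by
          rw [Fintype.sum_prod_type, Finset.sum_mul_sum]
          apply Finset.sum_congr rfl
          intro i _
          apply Finset.sum_congr rfl
          intro j _
          ring
        rw [hfact]
        have h1 := hnorm_sq n uv.2 (hNn1 uv.2 huv.2)
        have h2 := hnorm_sq k uv.1 (hNk1 uv.1 huv.1)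
        have h1' : 0 ≤ ∑ i, uv.2 i ^ 2 := by positivity
        have h2' : 0 ≤ ∑ j, uv.1 j ^ 2 := by positivity
        nlinarith
      have hch := chernoff_count (fun p : Fin n × Fin k => uv.2 p.1 * uv.1 p.2) ha t ht0
      have hcard : Fintype.card (Fin n × Fin k) = n * k := by
        simp [Fintype.card_prod]
      rw [hcard] at hch
      have htsq : -(t^2)/2 = -(18*n) := by
        rw [ht]
        rw [mul_pow, Real.sq_sqrt (by positivity : (0:ℝ) ≤ (n:ℝ))]
        ring
      rw [htsq] at hch
      exact hch
    have hbadcard : (Bad.card : ℝ) ≤ 9^k * 9^n * (2 ^ (n*k) * Real.exp (-(18*n))) := by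
      have h1 : Bad.card ≤ ∑ uv ∈ Nk ×ˢ Nn,
          (univ.filter (fun σ : Fin n × Fin k → Bool =>
            t ≤ ∑ p : Fin n × Fin k, (uv.2 p.1 * uv.1 p.2) * (if σ p then (1:ℝ) else -1))).card :=
        le_trans (Finset.card_le_card hBadsub) Finset.card_biUnion_le
      have h2 : ((∑ uv ∈ Nk ×ˢ Nn,
          (univ.filter (fun σ : Fin n × Fin k → Bool =>
            t ≤ ∑ p : Fin n × Fin k, (uv.2 p.1 * uv.1 p.2) * (if σ p then (1:ℝ) else -1))).card : ℕ) : ℝ)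
          ≤ ∑ uv ∈ Nk ×ˢ Nn, (2:ℝ) ^ (n*k) * Real.exp (-(18*n)) := by
        push_cast
        exact Finset.sum_le_sum hperpair
      have h3 : ∑ uv ∈ Nk ×ˢ Nn, (2:ℝ) ^ (n*k) * Real.exp (-(18*n))
          = (Nk.card * Nn.card : ℕ) * ((2:ℝ) ^ (n*k) * Real.exp (-(18*n))) := by
        rw [Finset.sum_const, Finset.card_product]
        push_cast
        ring
      have h4 : ((Nk.card * Nn.card : ℕ) : ℝ) ≤ 9^k * 9^n := by
        push_cast
        have := hNkcard
        have := hNncard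
        have h9k : (Nk.card : ℝ) ≤ 9^k := by exact_mod_cast hNkcard
        have h9n : (Nn.card : ℝ) ≤ 9^n := by exact_mod_cast hNncard
        have : (0:ℝ) ≤ Nn.card := by positivity
        nlinarith [pow_pos (show (0:ℝ) < 9 by norm_num) k, pow_pos (show (0:ℝ) < 9 by norm_num) n]
      calc (Bad.card : ℝ) ≤ ((∑ uv ∈ Nk ×ˢ Nn,
          (univ.filter (fun σ : Fin n × Fin k → Bool =>
            t ≤ ∑ p : Fin n × Fin k, (uv.2 p.1 * uv.1 p.2) * (if σ p then (1:ℝ) else -1))).card : ℕ) : ℝ) := by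
            exact_mod_cast h1
        _ ≤ ∑ uv ∈ Nk ×ˢ Nn, (2:ℝ) ^ (n*k) * Real.exp (-(18*n)) := h2
        _ = ((Nk.card * Nn.card : ℕ) : ℝ) * ((2:ℝ) ^ (n*k) * Real.exp (-(18*n))) := h3
        _ ≤ 9^k * 9^n * (2 ^ (n*k) * Real.exp (-(18*n))) := by
            apply mul_le_mul_of_nonneg_right h4
            positivity
    have h9 : (9:ℝ)^k * 9^n * Real.exp (-(18*n)) ≤ 1/2 := by
      have hexp3 : (4:ℝ) ≤ Real.exp 3 := by
        have := Real.add_one_le_exp (3:ℝ)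
        linarith
      have hexp18 : (4:ℝ)^6 ≤ Real.exp 18 := by
        have h6 : Real.exp 18 = (Real.exp 3)^6 := by
          rw [← Real.exp_nat_mul]
          norm_num
        rw [h6]
        apply pow_le_pow_left₀ (by norm_num) hexp3
      have hkey : (81:ℝ) * Real.exp (-18) ≤ 1/2 := by
        rw [Real.exp_neg]
        rw [mul_inv_le_iff₀ (by positivity), mul_comm (1/2 : ℝ)]
        calc (81:ℝ) ≤ (1/2) * 4^6 := by norm_num
          _ ≤ (1/2) * Real.exp 18 := by linarith
          _ = Real.exp 18 * (1/2) := by ring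
      have h9k9n : (9:ℝ)^k * 9^n ≤ 81^n := by
        have h1 : (9:ℝ)^k ≤ 9^n := pow_le_pow_right₀ (by norm_num) hkn
        have h2 : (81:ℝ)^n = 9^n * 9^n := by
          rw [show (81:ℝ) = 9*9 by norm_num, mul_pow]
        rw [h2]
        apply mul_le_mul_of_nonneg_right h1 (by positivity)
      have hexpn : Real.exp (-(18*n)) = (Real.exp (-18))^n := by
        rw [← Real.exp_nat_mul]
        ring_nf
      calc (9:ℝ)^k * 9^n * Real.exp (-(18*n)) ≤ 81^n * Real.exp (-(18*n)) := by
            apply mul_le_mul_of_nonneg_right h9k9n (by positivity)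
        _ = (81 * Real.exp (-18))^n := by rw [hexpn, mul_pow]
        _ ≤ (1/2)^n := by
            apply pow_le_pow_left₀ (by positivity) hkey
        _ ≤ (1/2)^1 := by
            apply pow_le_pow_of_le_one (by norm_num) (by norm_num) hn
        _ = 1/2 := by norm_num
    -- combine
    have hcast : (Good.card : ℝ) + Bad.card = 2 ^ (n*k) := by
      exact_mod_cast congrArg (fun x : ℕ => (x : ℝ)) hsplit
    have : (Bad.card : ℝ) ≤ (1/2) * 2 ^ (n*k) := by
      calc (Bad.card : ℝ) ≤ 9^k * 9^n * (2 ^ (n*k) * Real.exp (-(18*n))) := hbadcard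
        _ = (9^k * 9^n * Real.exp (-(18*n))) * 2 ^ (n*k) := by ring
        _ ≤ (1/2) * 2 ^ (n*k) := by
            apply mul_le_mul_of_nonneg_right h9 (by positivity)
    linarith
  · -- op norm property
    intro σ hσ x
    rw [hGood, Finset.mem_filter] at hσ
    have hop := opnorm_from_net (smat σ) Nk Nn hNn1 hNkcov hNncov t ht0 hσ.2 x
    have h144 : (2*t)^2 = 144 * n := by
      rw [ht, mul_pow, mul_pow, Real.sq_sqrt (by positivity : (0:ℝ) ≤ (n:ℝ))]
      ring
    rw [h144] at hop
    exact hop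


noncomputable def eps (n : ℕ) : ℝ := 1/(24 * Real.sqrt n)

-- Lemma C
lemma log_card_bound (N s : ℕ) (hN : 3 ≤ N) (hs : 100 * s ≤ N) (Ccard : ℕ)
    (h : (4/3:ℝ)^N ≤ 2^(s+1) * Ccard) : (N:ℝ)/100 ≤ Real.log Ccard := by
  have h2pos : (0:ℝ) < 2^(s+1) := by positivity
  have hR : (4/3:ℝ)^N / 2^(s+1) ≤ Ccard := by
    rw [div_le_iff₀ h2pos]
    calc (4/3:ℝ)^N ≤ 2^(s+1) * Ccard := h
      _ = Ccard * 2^(s+1) := by ring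
  have hRpos : (0:ℝ) < (4/3:ℝ)^N / 2^(s+1) := by positivity
  have hlog : Real.log ((4/3:ℝ)^N / 2^(s+1)) ≤ Real.log Ccard :=
    Real.log_le_log hRpos hR
  rw [Real.log_div (by positivity) (ne_of_gt h2pos), Real.log_pow, Real.log_pow] at hlog
  have l43 : (1/4:ℝ) ≤ Real.log (4/3) := by
    have h34 : Real.log (3/4) ≤ 3/4 - 1 := Real.log_le_sub_one_of_pos (by norm_num)
    have hinv : Real.log (4/3 : ℝ) = - Real.log (3/4) := by
      rw [← Real.log_inv]
      norm_num
    linarith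
  have l2 : Real.log 2 ≤ 0.6931472 := le_trans Real.log_two_lt_d9.le (by norm_num)
  have l2pos : (0:ℝ) ≤ Real.log 2 := Real.log_nonneg (by norm_num)
  have hsN : (s:ℝ) * 100 ≤ N := by exact_mod_cast by omega
  have hN3 : (3:ℝ) ≤ N := by exact_mod_cast hN
  have hs1 : ((s:ℝ) + 1) ≤ (N:ℝ)/100 + (N:ℝ)/3 := by
    linarith
  have hmul : ((s:ℝ) + 1) * Real.log 2 ≤ ((N:ℝ)/100 + (N:ℝ)/3) * 0.6931472 := by
    apply mul_le_mul hs1 l2 l2pos (by linarith)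
  have hq : (N:ℝ) * (1/4) ≤ (N:ℝ) * Real.log (4/3) := by
    apply mul_le_mul_of_nonneg_left l43 (by linarith)
  calc (N:ℝ)/100 ≤ (N:ℝ)*(1/4) - ((N:ℝ)/100 + (N:ℝ)/3) * 0.6931472 := by linarith
    _ ≤ (N:ℝ) * Real.log (4/3) - ((s:ℝ)+1) * Real.log 2 := by linarith
    _ ≤ Real.log Ccard := by
        push_cast at hlog
        linarith

-- Lemma D
lemma frobSq_Xdiff {k n : ℕ} (ε : ℝ) (σ σ' : Fin n × Fin k → Bool) :
    frobSq (ε • smat σ - ε • smat σ') = 4 * ε^2 * dH σ σ' := by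
  classical
  have hterm : ∀ p : Fin n × Fin k,
      ((ε • smat σ - ε • smat σ') p.1 p.2) ^2 = if σ p ≠ σ' p then 4*ε^2 else 0 := by
    intro p
    have h1 : (ε • smat σ - ε • smat σ') p.1 p.2
        = ε * smat σ p.1 p.2 - ε * smat σ' p.1 p.2 := by
      simp [Matrix.sub_apply, Matrix.smul_apply, smul_eq_mul]
    rw [h1]
    unfold smat
    by_cases h : σ p = σ' p
    · simp [h]
    · cases hb : σ p <;> cases hc : σ' p <;> simp_all <;> ring
  unfold frobSq
  have hprod : ∑ p : Fin n × Fin k, ((ε • smat σ - ε • smat σ') p.1 p.2)^2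
      = ∑ i : Fin n, ∑ j : Fin k, ((ε • smat σ - ε • smat σ') i j)^2 :=
    Fintype.sum_prod_type _
  rw [← hprod]
  calc ∑ p : Fin n × Fin k, (ε • smat σ - ε • smat σ') p.1 p.2 ^ 2
      = ∑ p : Fin n × Fin k, (if σ p ≠ σ' p then 4*ε^2 else 0) := by
        apply Finset.sum_congr rfl
        intro p _
        exact hterm p
    _ = ∑ p ∈ univ.filter (fun p => σ p ≠ σ' p), (4*ε^2) := by
        rw [Finset.sum_filter]
    _ = (dH σ σ' : ℝ) * (4*ε^2) := by
        rw [Finset.sum_const, nsmul_eq_mul]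
        unfold dH
        norm_num
    _ = 4 * ε^2 * dH σ σ' := by ring

-- Lemma E: eps squared
lemma eps_sq (n : ℕ) (hn : 1 ≤ n) : (eps n)^2 = 1/(576*n) := by
  unfold eps
  rw [div_pow, mul_pow, Real.sq_sqrt (by positivity : (0:ℝ) ≤ (n:ℝ))]
  norm_num

lemma X_opbound {k n : ℕ} (hn : 1 ≤ n) (σ : Fin n × Fin k → Bool)
    (hσ : ∀ x : Fin k → ℝ, (smat σ *ᵥ x) ⬝ᵥ (smat σ *ᵥ x) ≤ 144 * n * (x ⬝ᵥ x)) :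
    ∀ x : Fin k → ℝ, ((eps n • smat σ) *ᵥ x) ⬝ᵥ ((eps n • smat σ) *ᵥ x) ≤ (1/4) * (x ⬝ᵥ x) := by
  intro x
  have h1 : (eps n • smat σ) *ᵥ x = eps n • (smat σ *ᵥ x) := Matrix.smul_mulVec _ _ _
  rw [h1, smul_dotProduct, dotProduct_smul, smul_eq_mul, smul_eq_mul]
  have h2 : eps n * (eps n * ((smat σ *ᵥ x) ⬝ᵥ (smat σ *ᵥ x)))
      = (eps n)^2 * ((smat σ *ᵥ x) ⬝ᵥ (smat σ *ᵥ x)) := by ring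
  rw [h2, eps_sq n hn]
  have hnpos : (0:ℝ) < n := by exact_mod_cast hn
  have h3 := hσ x
  have h4 : (0:ℝ) ≤ 1/(576*n) := by positivity
  calc 1/(576*(n:ℝ)) * ((smat σ *ᵥ x) ⬝ᵥ (smat σ *ᵥ x))
      ≤ 1/(576*(n:ℝ)) * (144 * n * (x ⬝ᵥ x)) := mul_le_mul_of_nonneg_left h3 h4
    _ = (1/4) * (x ⬝ᵥ x) := by field_simp; ring

lemma frobSq_submatrix {α β α' β' : Type*} [Fintype α] [Fintype β] [Fintype α'] [Fintype β']
    (A : Matrix α β ℝ) (e1 : α' ≃ α) (e2 : β' ≃ β) :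
    frobSq (A.submatrix e1 e2) = frobSq A := by
  unfold frobSq
  calc ∑ i', ∑ j', (A.submatrix e1 e2 i' j')^2
      = ∑ i', ∑ j, (A (e1 i') j)^2 := by
        apply Finset.sum_congr rfl
        intro i' _
        exact Equiv.sum_comp e2 (fun j => (A (e1 i') j)^2)
    _ = ∑ i, ∑ j, (A i j)^2 := Equiv.sum_comp e1 (fun i => ∑ j, (A i j)^2)

lemma frobSq_zero_of_eq {α β : Type*} [Fintype α] [Fintype β] (A : Matrix α β ℝ) :
    frobSq (A - A) = 0 := by
  unfold frobSq
  simp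


-- Lemma B
lemma exists_code_good (k n : ℕ) (hk : 1 ≤ k) (hkn : k ≤ n)
    (Good : Finset (Fin n × Fin k → Bool)) (hGood : (2:ℝ)^(n*k) ≤ 2*Good.card) :
    ∃ C : Finset (Fin n × Fin k → Bool), C ⊆ Good ∧
      (∀ x ∈ C, ∀ y ∈ C, x ≠ y → (n*k)/100 < dH x y) ∧
      (4/3 : ℝ)^(n*k) ≤ 2^((n*k)/100 + 1) * C.card := by
  classical
  set N := n * k with hN
  set s := N / 100 with hs
  set b := ∑ i ∈ range (s+1), N.choose i with hb
  have hball : ∀ σ : Fin n × Fin k → Bool,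
      ((univ : Finset (Fin n × Fin k → Bool)).filter (fun σ' => dH σ σ' ≤ s)).card ≤ b := by
    intro σ
    have := ball_card_le σ s
    have hc : Fintype.card (Fin n × Fin k) = N := by simp [Fintype.card_prod, hN]
    rwa [hc] at this
  obtain ⟨C, hsub, hsep, hcount⟩ := exists_code Good s b hball
  refine ⟨C, hsub, hsep, ?_⟩
  have hbR : (b : ℝ) ≤ 2^s * (3/2)^N := binom_tail_le N s (Nat.div_le_self _ _)
  have hcountR : (Good.card : ℝ) ≤ (C.card : ℝ) * b := by exact_mod_cast hcount
  have hCb : (0:ℝ) ≤ (C.card : ℝ) := by positivity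
  have h2N : (2:ℝ)^N ≤ 2 * ((C.card : ℝ) * (2^s * (3/2)^N)) := by
    calc (2:ℝ)^N ≤ 2 * Good.card := hGood
      _ ≤ 2 * ((C.card : ℝ) * b) := by linarith
      _ ≤ 2 * ((C.card : ℝ) * (2^s * (3/2)^N)) := by
          have : (C.card : ℝ) * b ≤ (C.card : ℝ) * (2^s * (3/2)^N) :=
            mul_le_mul_of_nonneg_left hbR hCb
          linarith
  have hkey : (4/3:ℝ)^N * (3/2)^N = 2^N := by
    rw [← mul_pow]
    norm_num
  have h32pos : (0:ℝ) < (3/2:ℝ)^N := by positivity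
  have hgoal : (4/3:ℝ)^N * (3/2)^N ≤ (2^(s+1) * C.card) * (3/2)^N := by
    rw [hkey]
    calc (2:ℝ)^N ≤ 2 * ((C.card : ℝ) * (2^s * (3/2)^N)) := h2N
      _ = (2^(s+1) * C.card) * (3/2)^N := by ring
  exact le_of_mul_le_mul_right hgoal h32pos


end Pajor

open Pajor in
theorem pajor_grassmannian_packing :
    ∃ c > (0 : ℝ), ∃ c' > (0 : ℝ),
      ∀ k m₁ : ℕ, 1 ≤ k → 4 * k ≤ m₁ →
        ∃ 𝒰 : Finset (Matrix (Fin m₁) (Fin k) ℝ),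
          (∀ U ∈ 𝒰, Uᵀ * U = 1) ∧
          (∀ U ∈ 𝒰, ∀ U' ∈ 𝒰, U ≠ U' → c * k ≤ frobSq (U * Uᵀ - U' * U'ᵀ)) ∧
          c' * k * ((m₁ : ℝ) - k) ≤ Real.log 𝒰.card := by
  classical
  refine ⟨1/14400, by norm_num, 1/100, by norm_num, ?_⟩
  intro k m₁ hk hm
  set n := m₁ - k with hndef
  have hkn : k + n = m₁ := by omega
  have h3k : 3 * k ≤ n := by omega
  have hn1 : 1 ≤ n := by omega
  have hkn' : k ≤ n := by omega
  obtain ⟨Good, hGoodCard, hGoodOp⟩ := exists_good k n hk hkn'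
  obtain ⟨C, hCsub, hCsep, hCcard⟩ := exists_code_good k n hk hkn' Good hGoodCard
  set N := n * k with hNdef
  set s := N / 100 with hsdef
  set ε := eps n with hε
  set e : (Fin k ⊕ Fin n) ≃ Fin m₁ := finSumFinEquiv.trans (finCongr hkn) with he
  set Umap : (Fin n × Fin k → Bool) → Matrix (Fin m₁) (Fin k) ℝ :=
    fun σ => (Um (ε • smat σ)).submatrix ⇑e.symm id with hUmap
  -- orthonormality
  have hortho : ∀ σ, (Umap σ)ᵀ * Umap σ = 1 := by
    intro σ
    rw [hUmap]
    simp only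
    rw [Matrix.transpose_submatrix]
    rw [Matrix.submatrix_mul_equiv ((Um (ε • smat σ))ᵀ) (Um (ε • smat σ)) id e.symm id]
    rw [Um_orthonormal, Matrix.submatrix_id_id]
  -- projections
  have hproj : ∀ σ, Umap σ * (Umap σ)ᵀ = (Pm (ε • smat σ)).submatrix ⇑e.symm ⇑e.symm := by
    intro σ
    rw [hUmap]
    simp only
    rw [Matrix.transpose_submatrix]
    have h := Matrix.submatrix_mul_equiv (Um (ε • smat σ)) ((Um (ε • smat σ))ᵀ)
      ⇑e.symm (Equiv.refl (Fin k)) ⇑e.symm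
    simp only [Equiv.coe_refl] at h
    rw [h, Um_proj]
  have hdiff : ∀ σ σ', Umap σ * (Umap σ)ᵀ - Umap σ' * (Umap σ')ᵀ
      = (Pm (ε • smat σ) - Pm (ε • smat σ')).submatrix ⇑e.symm ⇑e.symm := by
    intro σ σ'
    rw [hproj, hproj]
    ext i j
    simp [Matrix.sub_apply, Matrix.submatrix_apply]
  -- pairwise separation
  have hsep_pair : ∀ σ ∈ C, ∀ σ' ∈ C, σ ≠ σ' →
      (1/14400 : ℝ) * k ≤ frobSq (Umap σ * (Umap σ)ᵀ - Umap σ' * (Umap σ')ᵀ) := by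
    intro σ hσ σ' hσ' hne
    rw [hdiff, frobSq_submatrix]
    have hop : ∀ x : Fin k → ℝ,
        ((ε • smat σ) *ᵥ x) ⬝ᵥ ((ε • smat σ) *ᵥ x) ≤ (1/4) * (x ⬝ᵥ x) :=
      X_opbound hn1 σ (hGoodOp σ (hCsub hσ))
    have hop' : ∀ x : Fin k → ℝ,
        ((ε • smat σ') *ᵥ x) ⬝ᵥ ((ε • smat σ') *ᵥ x) ≤ (1/4) * (x ⬝ᵥ x) :=
      X_opbound hn1 σ' (hGoodOp σ' (hCsub hσ'))
    have hsep := sep_main (ε • smat σ) (ε • smat σ') hop hop'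
    have hXd : frobSq (ε • smat σ - ε • smat σ') = 4 * ε^2 * dH σ σ' := frobSq_Xdiff ε σ σ'
    have hdH : s < dH σ σ' := hCsep σ hσ σ' hσ' hne
    have hdHR : (N : ℝ) ≤ 100 * (dH σ σ' : ℝ) := by
      have h1 : N < 100 * (s + 1) := by omega
      have h2 : s + 1 ≤ dH σ σ' := hdH
      have : N ≤ 100 * dH σ σ' := by omega
      exact_mod_cast this
    have hepssq : ε^2 = 1/(576*n) := by rw [hε]; exact eps_sq n hn1
    have hnR : (0:ℝ) < n := by exact_mod_cast hn1
    have hNR : (N:ℝ) = n * k := by rw [hNdef]; push_cast; ring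
    have hfrob : (1/14400 : ℝ) * k ≤ frobSq (ε • smat σ - ε • smat σ') := by
      rw [hXd, hepssq]
      rw [show (4:ℝ) * (1/(576*(n:ℝ))) * (dH σ σ' : ℝ)
          = (1/(144*(n:ℝ))) * (dH σ σ' : ℝ) by field_simp; ring]
      rw [show (1/14400 : ℝ) * k = (1/(144*(n:ℝ))) * ((n:ℝ) * k / 100) by field_simp; ring]
      apply mul_le_mul_of_nonneg_left _ (by positivity)
      rw [← hNR]
      linarith
    linarith
  -- the finset
  set 𝒰 : Finset (Matrix (Fin m₁) (Fin k) ℝ) := C.image Umap with h𝒰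
  have hinj : Set.InjOn Umap C := by
    intro σ hσ σ' hσ' heq
    by_contra hne
    have h1 := hsep_pair σ (by exact_mod_cast hσ) σ' (by exact_mod_cast hσ') hne
    rw [heq] at h1
    have h2 : frobSq (Umap σ' * (Umap σ')ᵀ - Umap σ' * (Umap σ')ᵀ) = 0 := by
      rw [sub_self]
      unfold frobSq
      simp
    rw [h2] at h1
    have hkR : (1:ℝ) ≤ k := by exact_mod_cast hk
    nlinarith
  have hcard𝒰 : 𝒰.card = C.card := Finset.card_image_of_injOn hinj
  refine ⟨𝒰, ?_, ?_, ?_⟩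
  · intro U hU
    obtain ⟨σ, hσ, rfl⟩ := Finset.mem_image.mp hU
    exact hortho σ
  · intro U hU U' hU' hne
    obtain ⟨σ, hσ, rfl⟩ := Finset.mem_image.mp hU
    obtain ⟨σ', hσ', rfl⟩ := Finset.mem_image.mp hU'
    have hσne : σ ≠ σ' := fun h => hne (by rw [h])
    exact hsep_pair σ hσ σ' hσ' hσne
  · rw [hcard𝒰]
    have hN3 : 3 ≤ N := by
      have : 3 ≤ n := by omega
      calc 3 = 3 * 1 := by ring
        _ ≤ n * k := Nat.mul_le_mul (by omega) hk
    have hlog := log_card_bound N s hN3 (by omega) C.card hCcard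
    have hnm : ((m₁ : ℝ) - k) = n := by
      have : (k:ℝ) + n = m₁ := by exact_mod_cast hkn
      linarith
    rw [hnm]
    have : (1/100 : ℝ) * k * n = (N:ℝ)/100 := by
      rw [hNdef]; push_cast; ring
    rw [this]
    exact hlog
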